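/- (Entrywise formula for the square root of the cycle Laplacian.) The matrix L_n is positive semidefinite, and its unique positive semidefinite square root L_n^{1/2} has entries (L_n^{1/2})_{ij} = (2/n) Σ_{m=0}^{n} sin(πm/n) · cos(2πm·d(i,j)/n), where d(i,j) is the cycle distance between i and j. -/

import Mathlib

open Real Matrix Finset

noncomputable section

/-- The Laplacian of the `n`-cycle. -/
def cycLap (n : ℕ) : Matrix (ZMod n) (ZMod n) ℝ :=
  Matrix.of fun i j => if i = j then 2 else if i = j + 1 ∨ j = i + 1 then -1 else 0

/-- The positive semidefinite square root of a positive semidefinite matrix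
(the definition `Matrix.PosSemidef.sqrt` of the older Mathlib, removed since). -/
def Matrix.PosSemidef.sqrt {n : Type*} [Fintype n] [DecidableEq n]
    {A : Matrix n n ℝ} (hA : A.PosSemidef) : Matrix n n ℝ :=
  hA.1.eigenvectorUnitary.1 * diagonal ((↑) ∘ (√·) ∘ hA.1.eigenvalues) *
    (star hA.1.eigenvectorUnitary : Matrix n n ℝ)

/-- The cycle distance on `ℤ/nℤ`. -/
def cycDist (n : ℕ) (p q : ZMod n) : ℕ := min (p - q).val (q - p).val




-- divisibility helpers
lemma dvd_small {n : ℕ} {d : ℤ} (h1 : -(n:ℤ) < d) (h2 : d < n) : (n:ℤ) ∣ d ↔ d = 0 := by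
  constructor
  · intro h
    by_contra hd
    have := Int.le_of_dvd (abs_pos.mpr hd) ((dvd_abs _ _).mpr h)
    have := abs_lt.mpr ⟨h1, h2⟩
    omega
  · rintro rfl; exact dvd_zero _

lemma dvd_small2 {n : ℕ} {d : ℤ} (h1 : 0 ≤ d) (h2 : d < 2*n) : (n:ℤ) ∣ d ↔ d = 0 ∨ d = n := by
  constructor
  · rintro ⟨t, rfl⟩
    have hn : 0 < (n:ℤ) := by
      rcases Nat.eq_zero_or_pos n with h|h
      · exfalso; subst h; push_cast at h2; omega
      · exact_mod_cast h
    have ht0 : 0 ≤ t := nonneg_of_mul_nonneg_right (by linarith) hn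
    have ht2 : t < 2 := by
      by_contra hc
      push_neg at hc
      nlinarith
    interval_cases t <;> simp
  · rintro (rfl | rfl)
    · exact dvd_zero _
    · exact dvd_refl _

-- complex exponential sum
lemma expsum (n : ℕ) (hn : n ≠ 0) (r : ℤ) :
    ∑ k ∈ range n, Complex.exp (2*π*Complex.I*r*k/n) = if (n:ℤ) ∣ r then (n:ℂ) else 0 := by
  have hn' : (n:ℂ) ≠ 0 := Nat.cast_ne_zero.mpr hn
  have hterm : ∀ k : ℕ, Complex.exp (2*π*Complex.I*r*k/n)
      = Complex.exp (2*π*Complex.I*r/n) ^ k := by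
    intro k
    rw [← Complex.exp_nat_mul]
    ring_nf
  simp_rw [hterm]
  by_cases h : (n:ℤ) ∣ r
  · obtain ⟨t, rfl⟩ := h
    have harg : (2*π*Complex.I*(((n:ℤ)*t : ℤ):ℂ)/n : ℂ) = (t:ℤ) * (2*π*Complex.I) := by
      push_cast; field_simp
    have h1 : Complex.exp (2*π*Complex.I*(((n:ℤ)*t : ℤ):ℂ)/n) = 1 := by
      rw [harg]; exact Complex.exp_int_mul_two_pi_mul_I t
    push_cast at h1 ⊢; simp [h1]
  · rw [if_neg h]
    have hne : Complex.exp (2*π*Complex.I*r/n) ≠ 1 := by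
      intro hc
      rw [Complex.exp_eq_one_iff] at hc
      obtain ⟨m, hm⟩ := hc
      apply h
      refine ⟨m, ?_⟩
      have h2 : (2*π*Complex.I : ℂ) ≠ 0 := by
        simp [Real.pi_ne_zero, Complex.I_ne_zero, Complex.ofReal_ne_zero]
      have : (r:ℂ) = n * m := by
        field_simp at hm
        exact hm
      exact_mod_cast this
    rw [geom_sum_eq hne]
    have : Complex.exp (2*π*Complex.I*r/n) ^ n = 1 := by
      rw [← Complex.exp_nat_mul,
        show (n : ℂ) * (2*π*Complex.I*r/n) = (r:ℤ) * (2*π*Complex.I) by field_simp]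
      exact Complex.exp_int_mul_two_pi_mul_I r
    simp [this]



lemma cossum (n : ℕ) (hn : n ≠ 0) (r : ℤ) :
    ∑ k ∈ range n, Real.cos (2*π*r*k/n) = if (n:ℤ) ∣ r then (n:ℝ) else 0 := by
  have h := congrArg Complex.re (expsum n hn r)
  rw [Complex.re_sum, apply_ite Complex.re] at h
  simp only [Complex.natCast_re, Complex.zero_re] at h
  rw [← h]
  apply Finset.sum_congr rfl
  intro k _
  rw [show (2*π*Complex.I*r*k/n : ℂ) = ((2*π*r*k/n : ℝ):ℂ) * Complex.I by push_cast; ring,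
    Complex.exp_ofReal_mul_I_re]

lemma sinsum (n : ℕ) (hn : n ≠ 0) (r : ℤ) :
    ∑ k ∈ range n, Real.sin (2*π*r*k/n) = 0 := by
  have h := congrArg Complex.im (expsum n hn r)
  rw [Complex.im_sum, apply_ite Complex.im] at h
  simp only [Complex.natCast_im, Complex.zero_im, ite_self] at h
  rw [← h]
  apply Finset.sum_congr rfl
  intro k _
  rw [show (2*π*Complex.I*r*k/n : ℂ) = ((2*π*r*k/n : ℝ):ℂ) * Complex.I by push_cast; ring,
    Complex.exp_ofReal_mul_I_im]

lemma shiftsum (n : ℕ) (hn : n ≠ 0) (A : ℝ) (r : ℤ) :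
    ∑ k ∈ range n, Real.cos (A - 2*π*r*k/n) = (if (n:ℤ) ∣ r then (n:ℝ) else 0) * Real.cos A := by
  simp_rw [Real.cos_sub]
  rw [Finset.sum_add_distrib, ← Finset.mul_sum, ← Finset.mul_sum]
  rw [cossum n hn r, sinsum n hn r]
  ring


lemma cosz (n : ℕ) (hn : n ≠ 0) (m : ℕ) {x y : ℤ} (h : (n:ℤ) ∣ (x - y)) :
    Real.cos (2*π*m*x/n) = Real.cos (2*π*m*y/n) := by
  obtain ⟨t, ht⟩ := h
  have hx : x = y + n*t := by linarith
  subst hx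
  have hn' : (n:ℝ) ≠ 0 := Nat.cast_ne_zero.mpr hn
  have : (2*π*(m:ℝ)*((y + (n:ℤ)*t : ℤ):ℝ))/n = 2*π*m*y/n + (((m:ℤ)*t : ℤ):ℝ) * (2*π) := by
    push_cast; field_simp
  rw [this, Real.cos_add_int_mul_two_pi]

lemma dvd_val_sub (n : ℕ) [NeZero n] (a b : ZMod n) :
    (n:ℤ) ∣ (((a-b).val : ℤ) - ((a.val : ℤ) - (b.val : ℤ))) := by
  rw [← ZMod.intCast_zmod_eq_zero_iff_dvd]
  push_cast
  simp [ZMod.natCast_val, ZMod.cast_id]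

lemma dvd_val_neg (n : ℕ) [NeZero n] (a : ZMod n) :
    (n:ℤ) ∣ (((-a).val : ℤ) - (-(a.val : ℤ))) := by
  rw [← ZMod.intCast_zmod_eq_zero_iff_dvd]
  push_cast
  simp [ZMod.natCast_val, ZMod.cast_id]

lemma zmod_sum (n : ℕ) [NeZero n] (f : ℕ → ℝ) :
    ∑ k : ZMod n, f k.val = ∑ k ∈ range n, f k := by
  refine Finset.sum_nbij' (i := fun k => k.val) (j := fun k => ((k : ℕ) : ZMod n))
    ?_ ?_ ?_ ?_ ?_ <;> intros a ha <;>
    simp_all [ZMod.val_lt, ZMod.natCast_val, ZMod.cast_id, Nat.mod_eq_of_lt]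

def sv (n m : ℕ) : ℝ := Real.sin (π*m/n)

def gv (n : ℕ) : ZMod n → ℝ := fun k =>
  (2/(n:ℝ)) * ∑ m ∈ range (n+1), sv n m * Real.cos (2*π*m*(k.val:ℝ)/n)

lemma gv_eq (n : ℕ) (hn : n ≠ 0) (k : ZMod n) :
    gv n k = (2/(n:ℝ)) * ∑ m ∈ range n, sv n m * Real.cos (2*π*m*(k.val:ℝ)/n) := by
  have hn' : (n:ℝ) ≠ 0 := Nat.cast_ne_zero.mpr hn
  have hs : sv n n = 0 := by
    unfold sv
    rw [show π*(n:ℝ)/n = π by field_simp]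
    exact Real.sin_pi
  unfold gv
  rw [Finset.sum_range_succ, hs]
  ring

lemma innerCC (n : ℕ) (hn : n ≠ 0) (A : ℝ) (m m' : ℕ) :
    ∑ k ∈ range n, Real.cos (A - 2*π*m*k/n) * Real.cos (2*π*m'*k/n)
      = (((if (n:ℤ) ∣ ((m:ℤ) - m') then (n:ℝ) else 0)
          + (if (n:ℤ) ∣ ((m:ℤ) + m') then (n:ℝ) else 0))/2) * Real.cos A := by
  have hn' : (n:ℝ) ≠ 0 := Nat.cast_ne_zero.mpr hn
  have trig : ∀ X Y : ℝ, Real.cos X * Real.cos Y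
      = (Real.cos (X + Y) + Real.cos (X - Y))/2 := by
    intro X Y; rw [Real.cos_add, Real.cos_sub]; ring
  have key : ∀ k ∈ range n, Real.cos (A - 2*π*m*k/n) * Real.cos (2*π*m'*k/n)
      = (Real.cos (A - 2*π*((((m:ℤ) - (m':ℤ)):ℤ):ℝ)*k/n)
        + Real.cos (A - 2*π*((((m:ℤ) + (m':ℤ)):ℤ):ℝ)*k/n))/2 := by
    intro k _
    rw [trig,
      show A - 2*π*(m:ℝ)*k/n + 2*π*m'*k/n = A - 2*π*((((m:ℤ) - (m':ℤ)):ℤ):ℝ)*k/n by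
        push_cast; ring,
      show A - 2*π*(m:ℝ)*k/n - 2*π*m'*k/n = A - 2*π*((((m:ℤ) + (m':ℤ)):ℤ):ℝ)*k/n by
        push_cast; ring]
  rw [Finset.sum_congr rfl key, ← Finset.sum_div, Finset.sum_add_distrib,
    shiftsum n hn A ((m:ℤ) - m'), shiftsum n hn A ((m:ℤ) + m')]
  ring

lemma sv_compl (n : ℕ) (hn : n ≠ 0) (m : ℕ) (hm : m < n) : sv n ((n - m) % n) = sv n m := by
  rcases Nat.eq_zero_or_pos m with rfl|hm0
  · simp [Nat.mod_self]
  · have hn' : (n:ℝ) ≠ 0 := Nat.cast_ne_zero.mpr hn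
    rw [Nat.mod_eq_of_lt (by omega)]
    unfold sv
    have hc : (((n - m):ℕ):ℝ) = (n:ℝ) - m := by
      have hle : m ≤ n := le_of_lt hm
      push_cast [hle]; ring
    rw [hc, show π*((n:ℝ)-m)/n = π - π*m/n by field_simp]
    exact Real.sin_pi_sub _

lemma inner2 (n : ℕ) (hn3 : 3 ≤ n) (A : ℝ) (m : ℕ) (hm : m < n) :
    ∑ m' ∈ range n, sv n m' *
        ∑ kk ∈ range n, Real.cos (A - 2*π*m*kk/n) * Real.cos (2*π*m'*kk/n)
      = (n:ℝ) * sv n m * Real.cos A := by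
  have hn : n ≠ 0 := by omega
  have e : ∀ m' ∈ range n, sv n m' *
      ∑ kk ∈ range n, Real.cos (A - 2*π*m*kk/n) * Real.cos (2*π*m'*kk/n)
      = ((if m' = m then (n:ℝ) else 0) * sv n m'
         + (if m' = (n-m)%n then (n:ℝ) else 0) * sv n m') * (Real.cos A / 2) := by
    intro m' hm'
    rw [Finset.mem_range] at hm'
    have h1 : ((n:ℤ) ∣ ((m:ℤ) - m')) ↔ m' = m := by
      rw [dvd_small (by push_cast; omega) (by push_cast; omega)]; omega
    have h2 : ((n:ℤ) ∣ ((m:ℤ) + m')) ↔ m' = (n-m)%n := by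
      rw [dvd_small2 (by push_cast; omega) (by push_cast; omega)]
      rcases Nat.eq_zero_or_pos m with rfl|hm0
      · rw [Nat.sub_zero, Nat.mod_self]; omega
      · rw [Nat.mod_eq_of_lt (by omega)]; omega
    rw [innerCC n hn A m m', if_congr h1 rfl rfl, if_congr h2 rfl rfl]
    ring
  rw [Finset.sum_congr rfl e, ← Finset.sum_mul]
  have key : ∑ m' ∈ range n, ((if m' = m then (n:ℝ) else 0) * sv n m'
      + (if m' = (n-m)%n then (n:ℝ) else 0) * sv n m')
      = (n:ℝ) * sv n m + (n:ℝ) * sv n ((n-m)%n) := by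
    rw [Finset.sum_add_distrib]
    congr 1
    · simp only [ite_mul, zero_mul]
      rw [Finset.sum_ite_eq' (range n) m (fun m' => (n:ℝ) * sv n m'),
        if_pos (Finset.mem_range.mpr hm)]
    · simp only [ite_mul, zero_mul]
      rw [Finset.sum_ite_eq' (range n) ((n-m)%n) (fun m' => (n:ℝ) * sv n m'),
        if_pos (Finset.mem_range.mpr (Nat.mod_lt _ (by omega)))]
  rw [key, sv_compl n hn m hm]
  ring

lemma conv (n : ℕ) [NeZero n] (hn3 : 3 ≤ n) (b : ZMod n) :
    ∑ k : ZMod n, gv n (b - k) * gv n k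
      = if b = 0 then 2 else if b = 1 ∨ b = -1 then -1 else 0 := by
  have hn : n ≠ 0 := NeZero.ne n
  have hn' : (n:ℝ) ≠ 0 := Nat.cast_ne_zero.mpr hn
  set c : ℝ := (2/(n:ℝ))*(2/(n:ℝ)) with hc
  set A : ℕ → ℝ := fun m => 2*π*m*(b.val:ℝ)/n with hA
  -- step 1 : to range n
  have e0 : ∑ k : ZMod n, gv n (b - k) * gv n k
      = ∑ kk ∈ range n, gv n (b - (kk : ZMod n)) * gv n ((kk : ℕ) : ZMod n) := by
    rw [← zmod_sum n (fun kk => gv n (b - (kk : ZMod n)) * gv n ((kk:ℕ) : ZMod n))]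
    apply Finset.sum_congr rfl
    intro k _
    simp [ZMod.natCast_val, ZMod.cast_id]
  rw [e0]
  -- step 2 : expand each product into a double sum
  have e1 : ∀ kk ∈ range n, gv n (b - (kk : ZMod n)) * gv n ((kk:ℕ) : ZMod n)
      = ∑ m ∈ range n, ∑ m' ∈ range n, (c * (sv n m * sv n m')) *
          (Real.cos (A m - 2*π*m*kk/n) * Real.cos (2*π*m'*kk/n)) := by
    intro kk hkk
    rw [Finset.mem_range] at hkk
    have hval : ((kk : ZMod n)).val = kk := ZMod.val_natCast_of_lt hkk
    have hcosm : ∀ m : ℕ, Real.cos (2*π*m*(((b - (kk:ZMod n)).val:ℕ):ℝ)/n)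
        = Real.cos (A m - 2*π*m*kk/n) := by
      intro m
      have h1 := cosz n hn m (dvd_val_sub n b (kk:ZMod n))
      push_cast at h1
      rw [hval] at h1
      rw [h1, hA]
      congr 1
      ring
    rw [gv_eq n hn, gv_eq n hn, hval]
    simp_rw [hcosm]
    rw [mul_mul_mul_comm, Finset.sum_mul_sum, ← hc, Finset.mul_sum]
    apply Finset.sum_congr rfl; intro m _
    rw [Finset.mul_sum]
    apply Finset.sum_congr rfl; intro m' _
    ring
  rw [Finset.sum_congr rfl e1]
  -- step 3 : swap the kk-sum inside
  rw [Finset.sum_comm]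
  have e2 : ∀ m ∈ range n,
      (∑ kk ∈ range n, ∑ m' ∈ range n, (c * (sv n m * sv n m')) *
          (Real.cos (A m - 2*π*m*kk/n) * Real.cos (2*π*m'*kk/n)))
      = (c * sv n m) * ((n:ℝ) * sv n m * Real.cos (A m)) := by
    intro m hm
    rw [Finset.mem_range] at hm
    rw [Finset.sum_comm]
    have e3 : ∀ m' ∈ range n, (∑ kk ∈ range n, (c * (sv n m * sv n m')) *
          (Real.cos (A m - 2*π*m*kk/n) * Real.cos (2*π*m'*kk/n)))
        = (c * sv n m) * (sv n m' *
            ∑ kk ∈ range n, Real.cos (A m - 2*π*m*kk/n) * Real.cos (2*π*m'*kk/n)) := by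
      intro m' _
      rw [← Finset.mul_sum]
      ring
    rw [Finset.sum_congr rfl e3, ← Finset.mul_sum, inner2 n hn3 (A m) m hm]
  rw [Finset.sum_congr rfl e2]
  -- step 4 : the single sum
  have e4 : ∀ m ∈ range n, (c * sv n m) * ((n:ℝ) * sv n m * Real.cos (A m))
      = (2/(n:ℝ)) * ((Real.cos (2*π*(b.val:ℝ)*m/n))
          - (Real.cos (0 - 2*π*1*m/n) * Real.cos (2*π*(b.val:ℝ)*m/n))) := by
    intro m hm
    have hsq : sv n m ^ 2 = 1/2 - Real.cos (2*π*m/n)/2 := by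
      unfold sv
      rw [Real.sin_sq, Real.cos_sq]
      rw [show 2*(π*m/n) = 2*π*m/n by ring]
      ring
    have h1 : (c * sv n m) * ((n:ℝ) * sv n m * Real.cos (A m))
        = (4/(n:ℝ)) * (sv n m ^2 * Real.cos (A m)) := by
      rw [hc]; field_simp; ring
    rw [h1, hsq, hA]
    simp only []
    rw [show Real.cos (0 - 2*π*1*m/n) = Real.cos (2*π*m/n) by
      rw [show (0:ℝ) - 2*π*1*m/n = -(2*π*m/n) by ring, Real.cos_neg]]
    rw [show 2*π*(m:ℝ)*(b.val:ℝ)/n = 2*π*(b.val:ℝ)*m/n by ring]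
    field_simp
    ring
  rw [Finset.sum_congr rfl e4, ← Finset.mul_sum, Finset.sum_sub_distrib]
  -- step 5 : evaluate the two sums
  have hfst := cossum n hn (b.val : ℤ)
  push_cast at hfst
  rw [hfst]
  have hsnd := innerCC n hn 0 1 b.val
  push_cast at hsnd
  rw [hsnd, Real.cos_zero]
  -- step 6 : resolve divisibility conditions
  have hdvd : ∀ x : ℤ, ((n:ℤ) ∣ x) ↔ ((x : ZMod n) = 0) :=
    fun x => (ZMod.intCast_zmod_eq_zero_iff_dvd x n).symm
  have c0 : ((n:ℤ) ∣ (b.val:ℤ)) ↔ b = 0 := by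
    rw [hdvd]; push_cast; simp [ZMod.natCast_val, ZMod.cast_id]
  have c1 : ((n:ℤ) ∣ ((1:ℤ) - (b.val:ℤ))) ↔ b = 1 := by
    rw [hdvd]; push_cast; simp [ZMod.natCast_val, ZMod.cast_id, sub_eq_zero, eq_comm]
    constructor <;> (intro h; linear_combination h)
  have cm1 : ((n:ℤ) ∣ ((1:ℤ) + (b.val:ℤ))) ↔ b = -1 := by
    rw [hdvd]; push_cast; simp [ZMod.natCast_val, ZMod.cast_id]
    constructor <;> (intro h; linear_combination h)
  rw [if_congr c0 rfl rfl, if_congr c1 rfl rfl, if_congr cm1 rfl rfl]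
  -- step 7 : case analysis
  haveI : Fact (1 < n) := ⟨by omega⟩
  have h01 : (0 : ZMod n) ≠ 1 := by
    intro h
    have := congrArg ZMod.val h
    rw [ZMod.val_zero, ZMod.val_one] at this
    exact absurd this (by omega)
  have h0m1 : (0 : ZMod n) ≠ -1 := by
    intro h
    have h2 : ((1:ℕ) : ZMod n) = 0 := by push_cast; linear_combination h
    rw [ZMod.natCast_eq_zero_iff] at h2
    have := Nat.le_of_dvd one_pos h2
    omega
  have h1m1 : (1 : ZMod n) ≠ -1 := by
    intro h
    have h2 : ((2:ℕ) : ZMod n) = 0 := by push_cast; linear_combination h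
    rw [ZMod.natCast_eq_zero_iff] at h2
    have := Nat.le_of_dvd two_pos h2
    omega
  rcases eq_or_ne b 0 with rfl|hb0
  · rw [if_pos rfl, if_pos rfl, if_neg h01, if_neg h0m1]
    field_simp
    ring
  rcases eq_or_ne b 1 with rfl|hb1
  · rw [if_neg (fun h => h01 h.symm), if_pos rfl, if_neg h1m1,
      if_neg (fun h => h01 h.symm), if_pos (Or.inl rfl)]
    field_simp
    ring
  rcases eq_or_ne b (-1) with rfl|hbm1
  · rw [if_neg (fun h => h0m1 h.symm), if_neg (fun h => h1m1 h.symm), if_pos rfl,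
      if_neg (fun h => h0m1 h.symm), if_pos (Or.inr rfl)]
    field_simp
    ring
  · rw [if_neg hb0, if_neg hb1, if_neg hbm1, if_neg hb0,
      if_neg (by rintro (h|h) <;> [exact hb1 h; exact hbm1 h])]
    ring

lemma cycLap_circ (n : ℕ) : cycLap n
    = Matrix.circulant (fun b : ZMod n => if b = 0 then (2:ℝ) else if b = 1 ∨ b = -1 then -1 else 0) := by
  ext i j
  rw [Matrix.circulant_apply]
  show (if i = j then (2:ℝ) else if i = j + 1 ∨ j = i + 1 then -1 else 0) = _
  have h1 : i = j ↔ i - j = 0 := by rw [sub_eq_zero]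
  have h2 : (i = j + 1 ∨ j = i + 1) ↔ (i - j = 1 ∨ i - j = -1) := by
    constructor <;> rintro (h|h)
    · exact Or.inl (by linear_combination h)
    · exact Or.inr (by linear_combination -h)
    · exact Or.inl (by linear_combination h)
    · exact Or.inr (by linear_combination -h)
  rw [if_congr h1 rfl rfl, if_congr h2 rfl rfl]

lemma vecMulVec_psd {ι : Type*} [Fintype ι] (u : ι → ℝ) : (Matrix.vecMulVec u u).PosSemidef := by
  refine Matrix.PosSemidef.of_dotProduct_mulVec_nonneg ?_ ?_
  · ext i j
    simp [Matrix.vecMulVec_apply, Matrix.conjTranspose_apply, mul_comm]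
  · intro x
    have hmv : Matrix.vecMulVec u u *ᵥ x = fun i => u i * (u ⬝ᵥ x) := by
      funext i
      simp [Matrix.vecMulVec_apply, Matrix.mulVec, dotProduct, Finset.mul_sum, mul_assoc]
    rw [hmv]
    have h2 : star x ⬝ᵥ (fun i => u i * (u ⬝ᵥ x)) = (u ⬝ᵥ x) * (u ⬝ᵥ x) := by
      simp only [dotProduct, star_trivial]
      rw [Finset.sum_mul]
      exact Finset.sum_congr rfl fun i _ => by ring
    rw [h2]
    exact mul_self_nonneg _

lemma psd_smul {ι : Type*} [Fintype ι] {A : Matrix ι ι ℝ} (hA : A.PosSemidef)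
    {c : ℝ} (hc : 0 ≤ c) : (c • A).PosSemidef := by
  refine Matrix.PosSemidef.of_dotProduct_mulVec_nonneg ?_ ?_
  · show (c • A)ᴴ = c • A
    rw [Matrix.conjTranspose_smul, hA.1.eq]
    simp
  · intro x
    rw [Matrix.smul_mulVec, dotProduct_smul, smul_eq_mul]
    exact mul_nonneg hc (hA.dotProduct_mulVec_nonneg x)

def uvec (n m : ℕ) : ZMod n → ℝ := fun x => Real.cos (2*π*m*(x.val:ℝ)/n)
def wvec (n m : ℕ) : ZMod n → ℝ := fun x => Real.sin (2*π*m*(x.val:ℝ)/n)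

lemma circ_gv_decomp (n : ℕ) [NeZero n] :
    Matrix.circulant (gv n) = ∑ m ∈ range (n+1), ((2/(n:ℝ)) * sv n m) •
      (Matrix.vecMulVec (uvec n m) (uvec n m) + Matrix.vecMulVec (wvec n m) (wvec n m)) := by
  have hn : n ≠ 0 := NeZero.ne n
  ext i j
  rw [Matrix.sum_apply, Matrix.circulant_apply]
  have hcos : ∀ m : ℕ, Real.cos (2*π*m*(((i-j).val:ℕ):ℝ)/n)
      = uvec n m i * uvec n m j + wvec n m i * wvec n m j := by
    intro m
    have h1 := cosz n hn m (dvd_val_sub n i j)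
    push_cast at h1
    rw [h1, show 2*π*(m:ℝ)*((i.val:ℝ) - (j.val:ℝ))/n
        = 2*π*m*(i.val:ℝ)/n - 2*π*m*(j.val:ℝ)/n by ring, Real.cos_sub]
    rfl
  show (2/(n:ℝ)) * ∑ m ∈ range (n+1), sv n m * Real.cos (2*π*m*(((i-j).val:ℕ):ℝ)/n) = _
  simp_rw [hcos]
  rw [Finset.mul_sum]
  apply Finset.sum_congr rfl
  intro m _
  simp only [Matrix.smul_apply, Matrix.add_apply, Matrix.vecMulVec_apply, smul_eq_mul]
  ring

set_option maxHeartbeats 1000000 in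
lemma circ_gv_psd (n : ℕ) [NeZero n] : (Matrix.circulant (gv n)).PosSemidef := by
  rw [circ_gv_decomp n]
  apply Finset.sum_induction _ _ (fun a b ha hb => ha.add hb) Matrix.PosSemidef.zero
  intro m hm
  rw [Finset.mem_range] at hm
  have hn : n ≠ 0 := NeZero.ne n
  have hsv : 0 ≤ sv n m := by
    unfold sv
    apply Real.sin_nonneg_of_nonneg_of_le_pi
    · positivity
    · rw [div_le_iff₀ (by positivity)]
      have hm' : (m:ℝ) ≤ n := by exact_mod_cast Nat.lt_succ_iff.mp hm
      nlinarith [Real.pi_pos]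
  exact psd_smul ((vecMulVec_psd _).add (vecMulVec_psd _)) (by positivity)

lemma circ_gv_sq (n : ℕ) [NeZero n] (hn3 : 3 ≤ n) :
    (Matrix.circulant (gv n))^2 = cycLap n := by
  rw [pow_two, Matrix.circulant_mul, cycLap_circ, Matrix.circulant_inj]
  funext b
  rw [show (Matrix.circulant (gv n) *ᵥ gv n) b = ∑ k : ZMod n, gv n (b - k) * gv n k by
    simp [Matrix.mulVec, dotProduct, Matrix.circulant_apply], conv n hn3 b]

open scoped MatrixOrder in
lemma psd_sqrt_eq {ι : Type*} [Fintype ι] [DecidableEq ι] {A B : Matrix ι ι ℝ}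
    (hB : B.PosSemidef) (hA : A.PosSemidef) (h : B ^ 2 = A) : B = hA.sqrt := by
  have h1 : CFC.sqrt A = B := CFC.sqrt_unique (by rw [← h, sq]) hB.nonneg
  rw [CFC.sqrt_eq_real_sqrt A hA.nonneg, cfcₙ_eq_cfc, hA.1.cfc_eq] at h1
  rw [← h1]
  rfl

/-- Entrywise formula for the square root of the cycle Laplacian:
`L_n` is positive semidefinite, and its unique positive semidefinite square root
has entries `(L_n^{1/2})_{ij} = (2/n) Σ_{m=0}^{n} sin(πm/n) · cos(2πm·d(i,j)/n)`. -/
theorem cycle_laplacian_sqrt_entries (n : ℕ) [NeZero n] (hn : 3 ≤ n) :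
    ∃ hL : (cycLap n).PosSemidef, ∀ i j : ZMod n,
      hL.sqrt i j = (2 / (n : ℝ)) * ∑ m ∈ Finset.range (n + 1),
        Real.sin (π * (m : ℝ) / n) * Real.cos (2 * π * (m : ℝ) * (cycDist n i j : ℝ) / n) := by
  have hn0 : n ≠ 0 := NeZero.ne n
  have hS : (Matrix.circulant (gv n)).PosSemidef := circ_gv_psd n
  have hsq : (Matrix.circulant (gv n))^2 = cycLap n := circ_gv_sq n hn
  have hL : (cycLap n).PosSemidef := hsq ▸ hS.pow 2
  refine ⟨hL, fun i j => ?_⟩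
  rw [← psd_sqrt_eq hS hL hsq, Matrix.circulant_apply]
  show (2/(n:ℝ)) * ∑ m ∈ range (n+1), sv n m * Real.cos (2*π*m*(((i-j).val:ℕ):ℝ)/n) = _
  congr 1
  apply Finset.sum_congr rfl
  intro m _
  unfold sv
  congr 1
  unfold cycDist
  rcases min_cases ((i-j).val) ((j-i).val) with ⟨h, _⟩|⟨h, _⟩ <;> rw [h]
  have h1 := cosz n hn0 m (dvd_val_neg n (i - j))
  push_cast at h1
  rw [show j - i = -(i-j) by ring, h1,
    show 2*π*(m:ℝ)*(-((i-j).val:ℝ))/n = -(2*π*m*(((i-j).val:ℕ):ℝ)/n) by push_cast; ring,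
    Real.cos_neg]
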